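/- Let r ≥ 1, s ≥ 3, and let 0 ≤ k_1,…,k_{s-1}, ℓ ≤ r be integers. Then (ω_{k_1}, ω_{k_2}, …, ω_{k_{s-1}}, ω_ℓ) belongs to EqLR_r^s if and only if k_i ≤ ℓ for every i ∈ {1,…,s-1} and Σ_{i=1}^{s-1} k_i ≥ ℓ. -/

import Mathlib

open Matrix Polynomial BigOperators
open scoped ComplexOrder

noncomputable section

/-- A Hermitian `r × r` complex matrix `A` has eigenvalues `μ` (listed with
multiplicity): `A` is Hermitian and its characteristic polynomial is
`∏ i, (X - μ i)`. -/
def HasEigenvalues {r : ℕ} (A : Matrix (Fin r) (Fin r) ℂ) (μ : Fin r → ℝ) : Prop :=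
  A.IsHermitian ∧ A.charpoly = ∏ i, (X - Polynomial.C (μ i : ℂ))

/-- A tuple `(λ¹, …, λ^{s-1}, ν)` of real `r`-sequences. -/
abbrev Tup (r s : ℕ) := (Fin (s - 1) → Fin r → ℝ) × (Fin r → ℝ)

/-- The Hermitian eigencone `C_r^s`: tuples of nonincreasing sequences that are the
eigenvalues of Hermitian matrices `A₁, …, A_{s-1}, C` with `A₁ + ⋯ + A_{s-1} = C`. -/
def memC (r s : ℕ) (x : Tup r s) : Prop :=
  (∀ j, Antitone (x.1 j)) ∧ Antitone x.2 ∧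
  ∃ (A : Fin (s - 1) → Matrix (Fin r) (Fin r) ℂ) (B : Matrix (Fin r) (Fin r) ℂ),
    (∀ j, HasEigenvalues (A j) (x.1 j)) ∧ HasEigenvalues B x.2 ∧ (∑ j, A j) = B

/-- The majorized eigencone `EqC_r^s`: as above but `A₁ + ⋯ + A_{s-1} - C` is
positive semidefinite. -/
def memEqC (r s : ℕ) (x : Tup r s) : Prop :=
  (∀ j, Antitone (x.1 j)) ∧ Antitone x.2 ∧
  ∃ (A : Fin (s - 1) → Matrix (Fin r) (Fin r) ℂ) (B : Matrix (Fin r) (Fin r) ℂ),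
    (∀ j, HasEigenvalues (A j) (x.1 j)) ∧ HasEigenvalues B x.2 ∧ ((∑ j, A j) - B).PosSemidef

/-- The last (`r`-th) entry of an `r`-sequence. -/
def lastEntry {r : ℕ} (μ : Fin r → ℝ) : ℝ :=
  if h : 0 < r then μ ⟨r - 1, by omega⟩ else 0

/-- `LR_r^s = {x ∈ C_r^s : λ^j_r ≥ 0 for all j}`. -/
def memLR (r s : ℕ) (x : Tup r s) : Prop :=
  memC r s x ∧ ∀ j, 0 ≤ lastEntry (x.1 j)

/-- `C_{SL_r}^s = {x ∈ C_r^s : λ^j_r = 0 for all j}`. -/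
def memCSL (r s : ℕ) (x : Tup r s) : Prop :=
  memC r s x ∧ ∀ j, lastEntry (x.1 j) = 0

/-- `EqLR_r^s = {x ∈ EqC_r^s : λ^j_r ≥ 0 and λ^j_i ≤ ν_i for all i, j}`. -/
def memEqLR (r s : ℕ) (x : Tup r s) : Prop :=
  memEqC r s x ∧ (∀ j, 0 ≤ lastEntry (x.1 j)) ∧ ∀ j i, x.1 j i ≤ x.2 i

/-- `ω_k ∈ ℝ^r`: first `k` entries equal `1`, the rest `0`. -/
def omegaVec (r k : ℕ) : Fin r → ℝ := fun i => if (i : ℕ) < k then 1 else 0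

/-- `x_j ∈ (ℝ^r)^s`: `ω_r` in the `j`-th and last positions, `0` elsewhere. -/
def xvec (r s : ℕ) (j : Fin (s - 1)) : Tup r s :=
  (fun k => if k = j then omegaVec r r else 0, omegaVec r r)

/-- A nonzero `x` in a cone `K` spans an extremal ray of `K` if whenever
`x = y + z` with `y, z ∈ K`, both `y` and `z` are nonnegative multiples of `x`. -/
def IsExtremalRay {M : Type*} [AddCommMonoid M] [Module ℝ M] (K : Set M) (x : M) : Prop :=
  x ≠ 0 ∧ x ∈ K ∧ ∀ y z, y ∈ K → z ∈ K → x = y + z →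
    (∃ c : ℝ, 0 ≤ c ∧ y = c • x) ∧ (∃ c : ℝ, 0 ≤ c ∧ z = c • x)




section StmtAux




lemma ex_partial_sum (f : ℕ → ℕ) : ∀ n i, i < ∑ t ∈ Finset.range n, f t →
    ∃ m < n, (∑ t ∈ Finset.range m, f t) ≤ i ∧ i < (∑ t ∈ Finset.range m, f t) + f m := by
  intro n
  induction n with
  | zero => intro i hi; simp at hi
  | succ n ih =>
    intro i hi
    by_cases h : i < ∑ t ∈ Finset.range n, f t
    · obtain ⟨m, hm, h1, h2⟩ := ih i h
      exact ⟨m, by omega, h1, h2⟩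
    · refine ⟨n, by omega, by omega, ?_⟩
      rw [Finset.sum_range_succ] at hi
      omega

/-- Extension of `k : Fin n → ℕ` to `ℕ` by zero. -/
def kkN {n : ℕ} (k : Fin n → ℕ) (t : ℕ) : ℕ := if h : t < n then k ⟨t, h⟩ else 0

/-- Partial sums of `k`. -/
def psum {n : ℕ} (k : Fin n → ℕ) (m : ℕ) : ℕ := ∑ t ∈ Finset.range m, kkN k t

lemma psum_total {n : ℕ} (k : Fin n → ℕ) : psum k n = ∑ j, k j := by
  unfold psum
  rw [← Fin.sum_univ_eq_sum_range (kkN k) n]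
  refine Finset.sum_congr rfl fun j _ => ?_
  unfold kkN
  rw [dif_pos j.isLt]

lemma psum_cover {n : ℕ} (k : Fin n → ℕ) {i : ℕ} (hi : i < psum k n) :
    ∃ j : Fin n, psum k j.val ≤ i ∧ i < psum k j.val + k j := by
  obtain ⟨m, hm, h1, h2⟩ := ex_partial_sum (kkN k) n i hi
  refine ⟨⟨m, hm⟩, h1, ?_⟩
  have : kkN k m = k ⟨m, hm⟩ := by unfold kkN; rw [dif_pos hm]
  rw [← this]
  exact h2

/-- The diagonal 0/1 vector supported on the residues mod `ℓ` of `[S, S + kj)`. -/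
def aFun (r ℓ S kj : ℕ) : Fin r → ℝ := fun i =>
  if ((i : ℕ) < ℓ ∧ ∃ t ∈ Finset.Ico S (S + kj), t % ℓ = (i : ℕ)) then 1 else 0

lemma aFun_nonneg (r ℓ S kj : ℕ) (i : Fin r) : 0 ≤ aFun r ℓ S kj i := by
  unfold aFun; split <;> norm_num

lemma aFun_eq_one {r ℓ S kj : ℕ} {i : Fin r} (hiℓ : (i : ℕ) < ℓ)
    (h1 : S ≤ (i : ℕ)) (h2 : (i : ℕ) < S + kj) : aFun r ℓ S kj i = 1 := by
  unfold aFun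
  exact if_pos ⟨hiℓ, (i : ℕ), Finset.mem_Ico.mpr ⟨h1, h2⟩, Nat.mod_eq_of_lt hiℓ⟩

lemma card_filter_lt' {r m : ℕ} (h : m ≤ r) :
    ((Finset.univ : Finset (Fin r)).filter (fun i : Fin r => (i:ℕ) < m)).card = m := by
  have key := Finset.card_bij
    (s := (Finset.univ : Finset (Fin r)).filter (fun i : Fin r => (i:ℕ) < m))
    (t := Finset.range m) (fun i _ => (i : ℕ))
    (by intro a ha; simp at ha ⊢; exact ha)
    (by intro a _ b _ hab; exact Fin.ext hab)
    (by intro b hb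
        simp only [Finset.mem_range] at hb
        refine ⟨⟨b, lt_of_lt_of_le hb h⟩, by simp [hb], rfl⟩)
  simpa using key

lemma card_aFun_support {r ℓ : ℕ} (hl : ℓ ≤ r) (S kj : ℕ) (hkl : kj ≤ ℓ) :
    ((Finset.univ : Finset (Fin r)).filter
      (fun i : Fin r => (i : ℕ) < ℓ ∧ ∃ t ∈ Finset.Ico S (S + kj), t % ℓ = (i : ℕ))).card
      = kj := by
  by_cases h0 : kj = 0
  · subst h0
    simp
  · have hℓ0 : 0 < ℓ := lt_of_lt_of_le (Nat.pos_of_ne_zero h0) hkl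
    have key := Finset.card_bij
      (s := Finset.Ico S (S + kj))
      (t := (Finset.univ : Finset (Fin r)).filter
        (fun i : Fin r => (i : ℕ) < ℓ ∧ ∃ t ∈ Finset.Ico S (S + kj), t % ℓ = (i : ℕ)))
      (fun t _ => (⟨t % ℓ, lt_of_lt_of_le (Nat.mod_lt _ hℓ0) hl⟩ : Fin r))
      (by intro t ht
          simp only [Finset.mem_filter, Finset.mem_univ, true_and]
          exact ⟨Nat.mod_lt _ hℓ0, t, ht, rfl⟩)
      (by intro t₁ ht₁ t₂ ht₂ heq
          have e : t₁ % ℓ = t₂ % ℓ := congrArg Fin.val heq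
          have d₁ := Nat.div_add_mod t₁ ℓ
          have d₂ := Nat.div_add_mod t₂ ℓ
          simp only [Finset.mem_Ico] at ht₁ ht₂
          rcases lt_trichotomy (t₁ / ℓ) (t₂ / ℓ) with hq | hq | hq
          · have hm : ℓ * (t₁ / ℓ) + ℓ ≤ ℓ * (t₂ / ℓ) := by
              have := Nat.mul_le_mul_left ℓ (Nat.succ_le_of_lt hq)
              rwa [Nat.mul_succ] at this
            omega
          · rw [hq] at d₁; omega
          · have hm : ℓ * (t₂ / ℓ) + ℓ ≤ ℓ * (t₁ / ℓ) := by
              have := Nat.mul_le_mul_left ℓ (Nat.succ_le_of_lt hq)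
              rwa [Nat.mul_succ] at this
            omega)
      (by rintro i hi
          simp only [Finset.mem_filter, Finset.mem_univ, true_and] at hi
          obtain ⟨hiℓ, t, ht, hteq⟩ := hi
          exact ⟨t, ht, Fin.ext hteq⟩)
    rw [Nat.card_Ico] at key
    omega


lemma prod01 {r : ℕ} (P : Fin r → Prop) [DecidablePred P] :
    ∏ i, ((X : ℂ[X]) - C (if P i then (1:ℂ) else 0)) =
      (X - C 1) ^ (Finset.univ.filter P).card
        * X ^ (r - (Finset.univ.filter P).card) := by
  have h1 : ∀ i, (X : ℂ[X]) - C (if P i then (1:ℂ) else 0)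
      = if P i then X - C 1 else X := by
    intro i; split <;> simp
  simp_rw [h1]
  rw [Finset.prod_ite, Finset.prod_const, Finset.prod_const]
  congr 1
  rw [Finset.filter_not, Finset.card_sdiff_of_subset (Finset.filter_subset _ _)]
  simp

lemma card_filter_ltX {r m : ℕ} (h : m ≤ r) :
    ((Finset.univ : Finset (Fin r)).filter (fun i : Fin r => (i:ℕ) < m)).card = m := by
  have key := Finset.card_bij
    (s := (Finset.univ : Finset (Fin r)).filter (fun i : Fin r => (i:ℕ) < m))
    (t := Finset.range m) (fun i _ => (i : ℕ))
    (by intro a ha; simp at ha ⊢; exact ha)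
    (by intro a _ b _ hab; exact Fin.ext hab)
    (by intro b hb
        simp only [Finset.mem_range] at hb
        refine ⟨⟨b, lt_of_lt_of_le hb h⟩, by simp [hb], rfl⟩)
  simpa using key


lemma charpoly_diag {r : ℕ} (d : Fin r → ℂ) :
    (Matrix.diagonal d).charpoly = ∏ i, (X - C (d i)) := by
  rw [Matrix.charpoly]
  have h : (Matrix.diagonal d).charmatrix
      = Matrix.diagonal (fun i => (X : ℂ[X]) - C (d i)) := by
    ext i j
    by_cases h : i = j
    · subst h; simp [Matrix.charmatrix_apply_eq]
    · simp [Matrix.charmatrix_apply_ne _ _ _ h, Matrix.diagonal_apply_ne _ h]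
  rw [h, Matrix.det_diagonal]

lemma psd_diag_nonneg {r : ℕ} {M : Matrix (Fin r) (Fin r) ℂ} (h : M.PosSemidef)
    (i : Fin r) : 0 ≤ M i i := by
  exact h.diag_nonneg

lemma antitone_omega {r m : ℕ} :
    Antitone (fun i : Fin r => if (i:ℕ) < m then (1:ℝ) else 0) := by
  intro i j hij
  by_cases h : (j:ℕ) < m
  · simp [h, show (i:ℕ) < m from lt_of_le_of_lt (by exact_mod_cast hij) h]
  · simp only [h, if_false]
    split <;> norm_num

lemma sum_diagonal {r n : ℕ} (d : Fin n → Fin r → ℂ) :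
    ∑ j, Matrix.diagonal (d j) = Matrix.diagonal (fun i => ∑ j, d j i) := by
  ext i i'
  by_cases h : i = i'
  · subst h; simp [Matrix.sum_apply]
  · simp [Matrix.sum_apply, Matrix.diagonal_apply_ne _ h]

lemma herm_diag_real {r : ℕ} (d : Fin r → ℝ) :
    (Matrix.diagonal (fun i => (d i : ℂ))).IsHermitian :=
  Matrix.isHermitian_diagonal_of_self_adjoint _ (by
    funext i; exact Complex.conj_ofReal _)

lemma trace_of_eig {r : ℕ} (hr : 1 ≤ r) {A : Matrix (Fin r) (Fin r) ℂ} {μ : Fin r → ℝ}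
    (hA : A.IsHermitian) (hc : A.charpoly = ∏ i, (X - C ((μ i : ℝ) : ℂ))) :
    A.trace = ∑ i, ((μ i : ℝ) : ℂ) := by
  haveI : Nonempty (Fin r) := ⟨⟨0, hr⟩⟩
  rw [Matrix.trace_eq_neg_charpoly_coeff, hc]
  have := Polynomial.prod_X_sub_C_coeff_card_pred (Finset.univ : Finset (Fin r))
    (fun i => ((μ i : ℝ) : ℂ)) (by simp; omega)
  simp only [Finset.card_univ, Fintype.card_fin] at this
  rw [Fintype.card_fin, this, neg_neg]

lemma diag_aFun_charpoly {r ℓ : ℕ} (hl : ℓ ≤ r) (S kj : ℕ) (hkl : kj ≤ ℓ) :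
    (Matrix.diagonal (fun i : Fin r => ((aFun r ℓ S kj i : ℝ) : ℂ))).charpoly
      = ∏ i, (X - C ((omegaVec r kj i : ℝ) : ℂ)) := by
  rw [charpoly_diag]
  have e1 : ∀ i : Fin r, ((aFun r ℓ S kj i : ℝ) : ℂ)
      = if ((i : ℕ) < ℓ ∧ ∃ t ∈ Finset.Ico S (S + kj), t % ℓ = (i : ℕ)) then (1 : ℂ) else 0 := by
    intro i; unfold aFun; split <;> norm_num
  have e2 : ∀ i : Fin r, ((omegaVec r kj i : ℝ) : ℂ)
      = if (i : ℕ) < kj then (1 : ℂ) else 0 := by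
    intro i; unfold omegaVec; split <;> norm_num
  calc ∏ i, ((X : ℂ[X]) - C ((aFun r ℓ S kj i : ℝ) : ℂ))
      = ∏ i : Fin r, ((X : ℂ[X]) - C (if ((i : ℕ) < ℓ ∧
          ∃ t ∈ Finset.Ico S (S + kj), t % ℓ = (i : ℕ)) then (1:ℂ) else 0)) :=
        Finset.prod_congr rfl fun i _ => by rw [e1 i]
    _ = (X - C 1) ^ kj * X ^ (r - kj) := by
        rw [prod01, card_aFun_support hl S kj hkl]
    _ = ∏ i : Fin r, ((X : ℂ[X]) - C (if (i:ℕ) < kj then (1:ℂ) else 0)) := by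
        rw [prod01, card_filter_lt' (le_trans hkl hl)]
    _ = ∏ i, ((X : ℂ[X]) - C ((omegaVec r kj i : ℝ) : ℂ)) :=
        Finset.prod_congr rfl fun i _ => by rw [e2 i]

lemma antitone_omegaVec {r m : ℕ} : Antitone (omegaVec r m) := by
  unfold omegaVec
  exact antitone_omega


lemma sum_omega_real {r m : ℕ} (h : m ≤ r) :
    ∑ i : Fin r, omegaVec r m i = (m:ℝ) := by
  unfold omegaVec
  rw [Finset.sum_ite, Finset.sum_const, Finset.sum_const]
  simp [card_filter_ltX h]

end StmtAux

/-- `(ω_{k₁},…,ω_{k_{s-1}},ω_ℓ) ∈ EqLR_r^s` iff each `k_i ≤ ℓ` and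
`∑ k_i ≥ ℓ`. -/
theorem stmt5 (r s : ℕ) (hr : 1 ≤ r) (hs : 3 ≤ s) (k : Fin (s - 1) → ℕ) (ℓ : ℕ)
    (hk : ∀ j, k j ≤ r) (hl : ℓ ≤ r) :
    memEqLR r s (fun j => omegaVec r (k j), omegaVec r ℓ) ↔
      ((∀ j, k j ≤ ℓ) ∧ ℓ ≤ ∑ j, k j) := by
  classical
  constructor
  · rintro ⟨⟨_, _, A, B, hA, hB, hPSD⟩, _, hmaj⟩
    have hkl : ∀ j, k j ≤ ℓ := by
      intro j
      by_contra hlt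
      push_neg at hlt
      have h1 := hmaj j ⟨ℓ, lt_of_lt_of_le hlt (hk j)⟩
      simp only [omegaVec] at h1
      rw [if_pos hlt, if_neg (lt_irrefl ℓ)] at h1
      norm_num at h1
    refine ⟨hkl, ?_⟩
    have htr : 0 ≤ ((∑ j, A j) - B).trace := by
      rw [Matrix.trace]
      exact Finset.sum_nonneg fun i _ => psd_diag_nonneg hPSD i
    rw [Matrix.trace_sub, Matrix.trace_sum] at htr
    have hsum : ∀ (m : ℕ), m ≤ r → ∑ i : Fin r, ((omegaVec r m i : ℝ) : ℂ) = (m : ℂ) := by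
      intro m hm
      rw [← Complex.ofReal_sum, sum_omega_real hm]
      norm_cast
    have hAj : ∀ j, (A j).trace = ((k j : ℕ) : ℂ) := by
      intro j
      rw [trace_of_eig hr (hA j).1 (hA j).2, hsum _ (hk j)]
    have hBt : B.trace = (ℓ : ℂ) := by
      rw [trace_of_eig hr hB.1 hB.2, hsum _ hl]
    simp only [hAj, hBt] at htr
    rw [← Nat.cast_sum, sub_nonneg] at htr
    exact_mod_cast htr
  · rintro ⟨hkl, hlk⟩
    refine ⟨⟨fun j => antitone_omegaVec, antitone_omegaVec,
      (fun j => Matrix.diagonal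
        (fun i : Fin r => ((aFun r ℓ (psum k j.val) (k j) i : ℝ) : ℂ))),
      Matrix.diagonal (fun i : Fin r => ((omegaVec r ℓ i : ℝ) : ℂ)), ?_, ?_, ?_⟩, ?_, ?_⟩
    · exact fun j => ⟨herm_diag_real _, diag_aFun_charpoly hl _ _ (hkl j)⟩
    · exact ⟨herm_diag_real _, by rw [charpoly_diag]⟩
    · rw [sum_diagonal, Matrix.diagonal_sub]
      refine Matrix.PosSemidef.diagonal fun i => ?_
      have hc : (∑ j, ((aFun r ℓ (psum k j.val) (k j) i : ℝ) : ℂ))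
            - ((omegaVec r ℓ i : ℝ) : ℂ)
          = (((∑ j, aFun r ℓ (psum k j.val) (k j) i) - omegaVec r ℓ i : ℝ) : ℂ) := by
        push_cast; ring
      simp only [Pi.sub_apply, Pi.zero_apply]
      rw [hc, Complex.zero_le_real, sub_nonneg]
      by_cases hiℓ : (i : ℕ) < ℓ
      · have hiS : (i : ℕ) < psum k (s - 1) := by
          have := psum_total k; omega
        obtain ⟨j₀, hj1, hj2⟩ := psum_cover k hiS
        have h1 : aFun r ℓ (psum k j₀.val) (k j₀) i = 1 := aFun_eq_one hiℓ hj1 hj2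
        have h2 : omegaVec r ℓ i = 1 := by unfold omegaVec; exact if_pos hiℓ
        rw [h2, ← h1]
        exact Finset.single_le_sum (f := fun j : Fin (s-1) => aFun r ℓ (psum k j.val) (k j) i)
          (fun j _ => aFun_nonneg _ _ _ _ i) (Finset.mem_univ j₀)
      · have h2 : omegaVec r ℓ i = 0 := by unfold omegaVec; exact if_neg hiℓ
        rw [h2]
        exact Finset.sum_nonneg fun j _ => aFun_nonneg r ℓ (psum k j.val) (k j) i
    · intro j
      unfold lastEntry
      rw [dif_pos (by omega : 0 < r)]
      dsimp only
      unfold omegaVec; split <;> norm_num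
    · intro j i
      dsimp only
      unfold omegaVec
      by_cases h : (i : ℕ) < k j
      · rw [if_pos h, if_pos (lt_of_lt_of_le h (hkl j))]
      · rw [if_neg h]; split <;> norm_num
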